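/- Let G be a bipartite multigraph with maximum degree Δ. Using the palette {1, …, Δ+1}, any precoloured matching of G can be extended to a proper edge-colouring of all of G. -/

import Mathlib

variable {V E : Type*}

/-- Edges `e` and `f` of a multigraph (given by its endpoint map `ends`) are adjacent:
they are distinct and share an endpoint. -/
def MAdj (ends : E → Sym2 V) (e f : E) : Prop :=
  e ≠ f ∧ ∃ v : V, v ∈ ends e ∧ v ∈ ends f

/-- `c` is a proper edge-colouring of the multigraph: adjacent edges get distinct colours. -/
def MProper (ends : E → Sym2 V) (c : E → ℕ) : Prop :=
  ∀ e f : E, MAdj ends e f → c e ≠ c f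

/-- The degree of a vertex `v`: the number of edges incident with it. -/
noncomputable def mdeg (ends : E → Sym2 V) (v : V) : ℕ :=
  {e : E | v ∈ ends e}.ncard

set_option linter.unusedSectionVars false

namespace BEM

attribute [local instance] Classical.propDecidable

open Finset

noncomputable section

variable (ends : E → Sym2 V) (side : V → Bool)

/-- A bipartite edge has one endpoint on each side. -/
lemma exists_ends (hbip : ∀ (e : E) (u v : V), ends e = s(u, v) → side u ≠ side v) (e : E) :
    ∃ u v : V, ends e = s(u, v) ∧ side u = true ∧ side v = false := by
  have h : ∃ a b, ends e = s(a, b) := by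
    induction (ends e) using Sym2.inductionOn with
    | _ a b => exact ⟨a, b, rfl⟩
  obtain ⟨a, b, hab⟩ := h
  have hne := hbip e a b hab
  cases ha : side a <;> cases hb : side b
  · rw [ha, hb] at hne; exact absurd rfl hne
  · exact ⟨b, a, by rw [hab, Sym2.eq_swap], hb, ha⟩
  · exact ⟨a, b, hab, ha, hb⟩
  · rw [ha, hb] at hne; exact absurd rfl hne

variable (hbip : ∀ (e : E) (u v : V), ends e = s(u, v) → side u ≠ side v)

/-- The left endpoint (side = true). -/
def Lend (e : E) : V := (exists_ends ends side hbip e).choose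

/-- The right endpoint (side = false). -/
def Rend (e : E) : V := (exists_ends ends side hbip e).choose_spec.choose

lemma ends_eq (e : E) : ends e = s(Lend ends side hbip e, Rend ends side hbip e) :=
  (exists_ends ends side hbip e).choose_spec.choose_spec.1

lemma side_Lend (e : E) : side (Lend ends side hbip e) = true :=
  (exists_ends ends side hbip e).choose_spec.choose_spec.2.1

lemma side_Rend (e : E) : side (Rend ends side hbip e) = false :=
  (exists_ends ends side hbip e).choose_spec.choose_spec.2.2

lemma mem_ends_iff {v : V} {e : E} :
    v ∈ ends e ↔ v = Lend ends side hbip e ∨ v = Rend ends side hbip e := by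
  rw [ends_eq ends side hbip e]; exact Sym2.mem_iff

lemma madj_iff {e f : E} :
    MAdj ends e f ↔ e ≠ f ∧ (Lend ends side hbip e = Lend ends side hbip f ∨
      Rend ends side hbip e = Rend ends side hbip f) := by
  constructor
  · rintro ⟨hne, v, hv1, hv2⟩
    refine ⟨hne, ?_⟩
    rcases (mem_ends_iff ends side hbip).mp hv1 with h1 | h1 <;>
      rcases (mem_ends_iff ends side hbip).mp hv2 with h2 | h2
    · exact Or.inl (h1 ▸ h2 ▸ rfl)
    · exfalso
      have := side_Lend ends side hbip e
      have h2' := side_Rend ends side hbip f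
      rw [← h1, h2] at this; rw [this] at h2'; exact Bool.noConfusion h2'
    · exfalso
      have := side_Rend ends side hbip e
      have h2' := side_Lend ends side hbip f
      rw [← h1, h2] at this; rw [this] at h2'; exact Bool.noConfusion h2'
    · exact Or.inr (h1 ▸ h2 ▸ rfl)
  · rintro ⟨hne, h | h⟩
    · exact ⟨hne, Lend ends side hbip e, (mem_ends_iff ends side hbip).mpr (Or.inl rfl),
        (mem_ends_iff ends side hbip).mpr (Or.inl h)⟩
    · exact ⟨hne, Rend ends side hbip e, (mem_ends_iff ends side hbip).mpr (Or.inr rfl),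
        (mem_ends_iff ends side hbip).mpr (Or.inr h)⟩

variable [Fintype E]

/-- Degree of `v` with respect to the set `F` of edges. -/
def degF (F : Finset E) (v : V) : ℕ := #(F.filter fun e => v ∈ ends e)

lemma degF_mono {F F' : Finset E} (h : F ⊆ F') (v : V) : degF ends F v ≤ degF ends F' v :=
  card_le_card (filter_subset_filter _ h)

lemma degF_left {F : Finset E} {v : V} (hv : side v = true) :
    degF ends F v = #(F.filter fun e => Lend ends side hbip e = v) := by
  unfold degF
  congr 1
  apply filter_congr
  intro e _
  rw [mem_ends_iff ends side hbip]
  constructor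
  · rintro (h | h)
    · exact h.symm
    · exfalso; rw [h] at hv; rw [side_Rend ends side hbip e] at hv; exact Bool.noConfusion hv
  · exact fun h => Or.inl h.symm

lemma degF_right {F : Finset E} {v : V} (hv : side v = false) :
    degF ends F v = #(F.filter fun e => Rend ends side hbip e = v) := by
  unfold degF
  congr 1
  apply filter_congr
  intro e _
  rw [mem_ends_iff ends side hbip]
  constructor
  · rintro (h | h)
    · exfalso; rw [h] at hv; rw [side_Lend ends side hbip e] at hv; exact Bool.noConfusion hv
    · exact h.symm
  · exact fun h => Or.inr h.symm

/-- A matching: pairwise non-adjacent set of edges. -/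
def IsMatching (N : Finset E) : Prop := ∀ e ∈ N, ∀ f ∈ N, ¬ MAdj ends e f


include hbip in
/-- Hall-type lemma: a matching covering every vertex of a set `S₀` of
left-side vertices of full degree `D`. -/
lemma hall_cover (F : Finset E) (D : ℕ) (hD : 1 ≤ D)
    (hdeg : ∀ v, degF ends F v ≤ D)
    (S₀ : Finset V) (hS : ∀ v ∈ S₀, side v = true ∧ degF ends F v = D) :
    ∃ N : Finset E, N ⊆ F ∧ IsMatching ends N ∧ (∀ v ∈ S₀, ∃ e ∈ N, v ∈ ends e) ∧
      (∀ e ∈ N, ∃ v ∈ S₀, v ∈ ends e) := by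
  classical
  set L := Lend ends side hbip with hL
  set R := Rend ends side hbip with hR
  set t : ↥S₀ → Finset V := fun v => (F.filter (fun e => L e = ↑v)).image R with ht
  have hall : ∀ s : Finset ↥S₀, #s ≤ #(s.biUnion t) := by
    intro s
    set s' : Finset V := s.image Subtype.val with hs'
    have hcs' : #s' = #s := card_image_of_injective _ Subtype.val_injective
    have hmem : ∀ v ∈ s', v ∈ S₀ ∧ ∃ w ∈ s, Subtype.val w = v := by
      intro v hv
      rw [hs', mem_image] at hv
      obtain ⟨w, hw, rfl⟩ := hv
      exact ⟨w.2, w, hw, rfl⟩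
    set A := F.filter (fun e => L e ∈ s') with hA
    have hAcard : #A = D * #s := by
      have hdisj : A = s'.biUnion (fun v => F.filter fun e => L e = v) := by
        ext e
        simp only [hA, mem_filter, mem_biUnion]
        constructor
        · rintro ⟨he, hv⟩; exact ⟨L e, hv, he, rfl⟩
        · rintro ⟨v, hv, he, rfl⟩; exact ⟨he, hv⟩
      rw [hdisj, card_biUnion]
      · rw [← hcs']
        rw [Finset.sum_congr rfl (fun v hv => ?_), Finset.sum_const, smul_eq_mul, mul_comm]
        have hv0 := hmem v hv
        have := (hS v hv0.1).2
        rw [degF_left ends side hbip (hS v hv0.1).1] at this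
        exact this
      · intro x hx y hy hxy
        simp only [Function.onFun]; rw [Finset.disjoint_left]
        intro e he1 he2
        rw [mem_filter] at he1 he2
        exact hxy (he1.2 ▸ he2.2 ▸ rfl)
    have hBcard : #A ≤ D * #(s.biUnion t) := by
      have hsub : A ⊆ (s.biUnion t).biUnion (fun y => F.filter fun e => R e = y) := by
        intro e he
        rw [hA, mem_filter] at he
        obtain ⟨heF, hv⟩ := he
        obtain ⟨hS0, w, hw, hwv⟩ := hmem _ hv
        rw [mem_biUnion]
        refine ⟨R e, ?_, by rw [mem_filter]; exact ⟨heF, rfl⟩⟩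
        rw [mem_biUnion]
        refine ⟨w, hw, ?_⟩
        rw [ht, mem_image]
        exact ⟨e, by rw [mem_filter]; exact ⟨heF, by rw [hwv]⟩, rfl⟩
      calc #A ≤ #((s.biUnion t).biUnion (fun y => F.filter fun e => R e = y)) :=
              card_le_card hsub
        _ ≤ ∑ y ∈ s.biUnion t, #(F.filter fun e => R e = y) := card_biUnion_le
        _ ≤ ∑ _y ∈ s.biUnion t, D := by
              apply Finset.sum_le_sum
              intro y _
              refine le_trans (card_le_card ?_) (hdeg y)
              intro e he
              rw [mem_filter] at he ⊢
              refine ⟨he.1, ?_⟩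
              rw [mem_ends_iff ends side hbip]
              exact Or.inr he.2.symm
        _ = D * #(s.biUnion t) := by rw [Finset.sum_const, smul_eq_mul, mul_comm]
    have := hAcard ▸ hBcard
    exact Nat.le_of_mul_le_mul_left this hD
  obtain ⟨f, hfinj, hft⟩ := (Finset.all_card_le_biUnion_card_iff_exists_injective t).mp hall
  have hchoice : ∀ v : ↥S₀, ∃ e, e ∈ F ∧ L e = ↑v ∧ R e = f v := by
    intro v
    have := hft v
    rw [ht, mem_image] at this
    obtain ⟨e, he, hre⟩ := this
    rw [mem_filter] at he
    exact ⟨e, he.1, he.2, hre⟩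
  set g : ↥S₀ → E := fun v => (hchoice v).choose with hg
  have hgF : ∀ v, g v ∈ F := fun v => (hchoice v).choose_spec.1
  have hgL : ∀ v, L (g v) = ↑v := fun v => (hchoice v).choose_spec.2.1
  have hgR : ∀ v, R (g v) = f v := fun v => (hchoice v).choose_spec.2.2
  refine ⟨S₀.attach.image g, ?_, ?_, ?_, ?_⟩
  · intro e he
    rw [mem_image] at he
    obtain ⟨v, _, rfl⟩ := he
    exact hgF v
  · intro e he e' he' hadj
    rw [mem_image] at he he'
    obtain ⟨v, _, rfl⟩ := he
    obtain ⟨v', _, rfl⟩ := he'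
    rw [madj_iff ends side hbip] at hadj
    obtain ⟨hne, h | h⟩ := hadj
    · rw [← hL] at h
      rw [hgL, hgL] at h
      exact hne (by rw [Subtype.ext (h : (v:V) = v')])
    · rw [← hR] at h
      rw [hgR, hgR] at h
      exact hne (by rw [hfinj h])
  · intro v hv
    refine ⟨g ⟨v, hv⟩, mem_image_of_mem _ (mem_attach _ _), ?_⟩
    rw [mem_ends_iff ends side hbip]
    exact Or.inl (hgL ⟨v, hv⟩).symm
  · intro e he
    rw [mem_image] at he
    obtain ⟨v, _, rfl⟩ := he
    refine ⟨↑v, v.2, ?_⟩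
    rw [mem_ends_iff ends side hbip]
    exact Or.inl (hgL v).symm


include hbip in
/-- Any bipartite multigraph in which every vertex has degree `D` or `0` is properly
edge-colourable from any palette of `D` colours. -/
lemma regular_color (D : ℕ) : ∀ (F : Finset E) (C : Finset ℕ), #C = D →
    (∀ v, degF ends F v = D ∨ degF ends F v = 0) →
    ∃ c : E → ℕ, (∀ e ∈ F, c e ∈ C) ∧
      ∀ e ∈ F, ∀ f ∈ F, MAdj ends e f → c e ≠ c f := by
  classical
  induction D with
  | zero =>
    intro F C _ hreg
    have hFempty : ∀ e ∈ F, False := by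
      intro e he
      have h1 : 0 < degF ends F (Lend ends side hbip e) := by
        apply card_pos.mpr
        exact ⟨e, mem_filter.mpr ⟨he, (mem_ends_iff ends side hbip).mpr (Or.inl rfl)⟩⟩
      rcases hreg (Lend ends side hbip e) with h | h <;> omega
    exact ⟨fun _ => 0, fun e he => absurd (hFempty e he) not_false,
      fun e he => absurd (hFempty e he) not_false⟩
  | succ D ih =>
    intro F C hC hreg
    set L := Lend ends side hbip with hL
    set R := Rend ends side hbip with hR
    set NIL := F.image L with hNIL
    set NIR := F.image R with hNIR
    have hpos : ∀ e ∈ F, ∀ v, v ∈ ends e → degF ends F v = D + 1 := by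
      intro e he v hv
      rcases hreg v with h | h
      · exact h
      · exfalso
        have h1 : 0 < degF ends F v := card_pos.mpr ⟨e, mem_filter.mpr ⟨he, hv⟩⟩
        omega
    have hSL : ∀ v ∈ NIL, side v = true ∧ degF ends F v = D + 1 := by
      intro v hv
      rw [hNIL, mem_image] at hv
      obtain ⟨e, he, rfl⟩ := hv
      exact ⟨side_Lend ends side hbip e,
        hpos e he _ ((mem_ends_iff ends side hbip).mpr (Or.inl rfl))⟩
    have hSR : ∀ v ∈ NIR, side v = false ∧ degF ends F v = D + 1 := by
      intro v hv
      rw [hNIR, mem_image] at hv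
      obtain ⟨e, he, rfl⟩ := hv
      exact ⟨side_Rend ends side hbip e,
        hpos e he _ ((mem_ends_iff ends side hbip).mpr (Or.inr rfl))⟩
    have hdeg : ∀ v, degF ends F v ≤ D + 1 := by
      intro v; rcases hreg v with h | h <;> omega
    obtain ⟨N, hNF, hNmatch, hNcov, _⟩ :=
      hall_cover ends side hbip F (D+1) (Nat.succ_le_succ (Nat.zero_le _)) hdeg NIL hSL
    have hcount : ∀ (S : Finset V) (P : E → V), (∀ e ∈ F, P e ∈ S) →
        (∀ v ∈ S, #(F.filter fun e => P e = v) = D + 1) →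
        #(F) = (D+1) * #S := by
      intro S P hPS hfib
      have hFU : F = S.biUnion (fun v => F.filter fun e => P e = v) := by
        ext e
        rw [mem_biUnion]
        constructor
        · intro he; exact ⟨P e, hPS e he, mem_filter.mpr ⟨he, rfl⟩⟩
        · rintro ⟨v, _, he⟩; exact (mem_filter.mp he).1
      rw [hFU, card_biUnion]
      · rw [Finset.sum_congr rfl hfib, Finset.sum_const, smul_eq_mul, mul_comm]
      · intro x _ y _ hxy
        simp only [Function.onFun]; rw [Finset.disjoint_left]
        intro e he1 he2
        rw [mem_filter] at he1 he2
        exact hxy (he1.2 ▸ he2.2 ▸ rfl)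
    have hFL : #F = (D+1) * #NIL := by
      refine hcount NIL L (fun e he => mem_image_of_mem _ he) ?_
      intro v hv
      rw [← degF_left ends side hbip (hSL v hv).1]
      exact (hSL v hv).2
    have hFR : #F = (D+1) * #NIR := by
      refine hcount NIR R (fun e he => mem_image_of_mem _ he) ?_
      intro v hv
      rw [← degF_right ends side hbip (hSR v hv).1]
      exact (hSR v hv).2
    have hinjL : Set.InjOn L ↑N := by
      intro e he f hf hLf
      by_contra hne
      exact hNmatch e he f hf ((madj_iff ends side hbip).mpr ⟨hne, Or.inl (by rw[← hL]; exact hLf)⟩)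
    have hinjR : Set.InjOn R ↑N := by
      intro e he f hf hRf
      by_contra hne
      exact hNmatch e he f hf ((madj_iff ends side hbip).mpr ⟨hne, Or.inr (by rw[← hR]; exact hRf)⟩)
    have hNILsub : NIL ⊆ N.image L := by
      intro v hv
      obtain ⟨e, he, hve⟩ := hNcov v hv
      rcases (mem_ends_iff ends side hbip).mp hve with h | h
      · exact mem_image.mpr ⟨e, he, h.symm⟩
      · exfalso
        have hsr := side_Rend ends side hbip e
        rw [← h, (hSL v hv).1] at hsr
        exact Bool.noConfusion hsr
    have hNcard : #N = #NIL := by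
      apply le_antisymm
      · exact card_le_card_of_injOn L (fun e he => mem_image_of_mem _ (hNF he)) hinjL
      · exact le_trans (card_le_card hNILsub) (card_image_le)
    have hNIRcard : #NIR = #NIL := by
      have := hFL ▸ hFR
      exact Nat.eq_of_mul_eq_mul_left (Nat.succ_pos D) this.symm
    have hNIReq : N.image R = NIR := by
      apply eq_of_subset_of_card_le
      · intro v hv
        obtain ⟨e, he, rfl⟩ := mem_image.mp hv
        exact mem_image_of_mem _ (hNF he)
      · rw [hNIRcard, ← hNcard]
        exact le_of_eq (card_image_of_injOn hinjR).symm
    -- every vertex of positive degree is covered by N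
    have hcovall : ∀ v, degF ends F v = D + 1 → ∃ e ∈ N, v ∈ ends e := by
      intro v hv
      have h1 : 0 < degF ends F v := by omega
      obtain ⟨e, he⟩ := card_pos.mp h1
      rw [mem_filter] at he
      rcases (mem_ends_iff ends side hbip).mp he.2 with h | h
      · obtain ⟨f, hf, hvf⟩ := hNcov v (by rw [h]; exact mem_image_of_mem _ he.1)
        exact ⟨f, hf, hvf⟩
      · have hvNIR : v ∈ NIR := by rw [h]; exact mem_image_of_mem _ he.1
        rw [← hNIReq] at hvNIR
        obtain ⟨f, hf, hRf⟩ := mem_image.mp hvNIR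
        exact ⟨f, hf, (mem_ends_iff ends side hbip).mpr (Or.inr (by rw [← hRf, hR]))⟩
    set F' := F \ N with hF'
    have hreg' : ∀ v, degF ends F' v = D ∨ degF ends F' v = 0 := by
      intro v
      rcases hreg v with h | h
      · obtain ⟨e₀, he₀N, he₀v⟩ := hcovall v h
        left
        have hset : F'.filter (fun e => v ∈ ends e) =
            (F.filter fun e => v ∈ ends e) \ {e₀} := by
          ext e
          simp only [hF', mem_filter, mem_sdiff, mem_singleton]
          constructor
          · rintro ⟨⟨heF, heN⟩, hev⟩
            exact ⟨⟨heF, hev⟩, fun hee => heN (hee ▸ he₀N)⟩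
          · rintro ⟨⟨heF, hev⟩, hee⟩
            refine ⟨⟨heF, fun heN => ?_⟩, hev⟩
            by_cases hef : e = e₀
            · exact hee hef
            · exact hNmatch e heN e₀ he₀N ⟨hef, v, hev, he₀v⟩
        have : degF ends F' v = #((F.filter fun e => v ∈ ends e) \ {e₀}) := by
          rw [degF, hset]
        rw [this, card_sdiff_of_subset (by
          intro x hx
          rw [mem_singleton] at hx
          subst hx
          exact mem_filter.mpr ⟨hNF he₀N, he₀v⟩)]
        rw [card_singleton]
        have h' : #(F.filter fun e => v ∈ ends e) = D + 1 := h
        omega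
      · right
        have h2 : degF ends F' v ≤ degF ends F v := by
          rw [hF']
          exact degF_mono ends (sdiff_subset : F \ N ⊆ F) v
        omega
    have hCne : C.Nonempty := card_pos.mp (by omega)
    obtain ⟨q, hq⟩ := hCne
    obtain ⟨c', hc'1, hc'2⟩ := ih F' (C.erase q) (by rw [card_erase_of_mem hq, hC]; omega) hreg'
    refine ⟨fun e => if e ∈ N then q else c' e, ?_, ?_⟩
    · intro e he
      by_cases heN : e ∈ N
      · simp only [heN, if_pos]; exact hq
      · simp only [heN, if_neg, if_false]
        exact erase_subset _ _ (hc'1 e (mem_sdiff.mpr ⟨he, heN⟩))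
    · intro e he f hf hadj
      by_cases heN : e ∈ N <;> by_cases hfN : f ∈ N
      · exact absurd hadj (hNmatch e heN f hfN)
      · simp only [heN, hfN, if_pos, if_neg, if_false]
        have := hc'1 f (mem_sdiff.mpr ⟨hf, hfN⟩)
        exact fun hqq => (ne_of_mem_erase this) hqq.symm
      · simp only [heN, hfN, if_pos, if_neg, if_false]
        exact ne_of_mem_erase (hc'1 e (mem_sdiff.mpr ⟨he, heN⟩))
      · simp only [heN, hfN, if_neg, if_false]
        exact hc'2 e (mem_sdiff.mpr ⟨he, heN⟩) f (mem_sdiff.mpr ⟨hf, hfN⟩) hadj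


lemma card_filter_sum {A B : Type*} [Fintype A] [Fintype B] (p : A ⊕ B → Prop)
    [DecidablePred p] [DecidablePred (fun a => p (Sum.inl a))]
    [DecidablePred (fun b => p (Sum.inr b))] :
    #(univ.filter p) = #(univ.filter (fun a => p (Sum.inl a))) +
      #(univ.filter (fun b => p (Sum.inr b))) := by
  rw [← Finset.card_toLeft_add_card_toRight (u := univ.filter p)]
  have hl : (univ.filter p).toLeft = univ.filter (fun a => p (Sum.inl a)) := by
    ext a
    simp only [Finset.mem_toLeft, mem_filter, mem_univ, true_and]
  have hr : (univ.filter p).toRight = univ.filter (fun b => p (Sum.inr b)) := by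
    ext b
    simp only [Finset.mem_toRight, mem_filter, mem_univ, true_and]
  rw [hl, hr]

lemma card_filter_sigma {A : Type*} [Fintype A] {f : A → Type*} [∀ a, Fintype (f a)]
    (q : A → Prop) [DecidablePred q]
    [DecidablePred (fun x : Σ a, f a => q x.1)] :
    #(univ.filter (fun x : Σ a, f a => q x.1)) =
      ∑ a ∈ univ.filter q, Fintype.card (f a) := by
  have h1 : (univ : Finset (Σ a, f a)).filter (fun x => q x.1) =
      (univ.filter q).sigma (fun a => (univ : Finset (f a))) := by
    ext ⟨a, b⟩
    simp only [mem_filter, mem_univ, true_and, Finset.mem_sigma, and_true]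
  rw [h1, Finset.card_sigma]
  simp [Finset.card_univ]

lemma card_filter_subtype {A : Type*} (s : Finset A) (q : A → Prop)
    [DecidablePred q] [DecidablePred (fun a : ↥s => q ↑a)] :
    #(univ.filter (fun a : ↥s => q ↑a)) = #(s.filter q) := by
  apply Finset.card_bij (fun (a : ↥s) _ => (a : A))
  · intro a ha
    rw [mem_filter] at ha ⊢
    exact ⟨a.2, ha.2⟩
  · intro a _ b _ h
    exact Subtype.ext h
  · intro b hb
    rw [mem_filter] at hb
    exact ⟨⟨b, hb.1⟩, mem_filter.mpr ⟨mem_univ _, hb.2⟩, rfl⟩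

include hbip in
/-- König's edge-colouring theorem for bipartite multigraphs. -/
lemma konig (F : Finset E) (D : ℕ) (hdeg : ∀ v, degF ends F v ≤ D)
    (C : Finset ℕ) (hC : #C = D) :
    ∃ c : E → ℕ, (∀ e ∈ F, c e ∈ C) ∧ ∀ e ∈ F, ∀ f ∈ F, MAdj ends e f → c e ≠ c f := by
  classical
  set L := Lend ends side hbip with hLdef
  set R := Rend ends side hbip with hRdef
  set NI : Finset V := F.image L ∪ F.image R with hNI
  set k : V → ℕ := fun v => D - degF ends F v with hk
  set ends' : (↥F ⊕ ↥F) ⊕ (Σ v : ↥NI, Fin (k ↑v)) → Sym2 (V × Bool) := fun x =>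
    match x with
    | Sum.inl (Sum.inl e) => s((L ↑e, false), (R ↑e, false))
    | Sum.inl (Sum.inr e) => s((L ↑e, true), (R ↑e, true))
    | Sum.inr p => s((↑p.1, false), (↑p.1, true)) with hends'
  set side' : V × Bool → Bool := fun w => xor (side w.1) w.2 with hside'
  have hside'f : ∀ v : V, side' (v, false) = side v := by
    intro v; simp [hside']
  have hside't : ∀ v : V, side' (v, true) = ! side v := by
    intro v; simp [hside']
  have key : ∀ (a b : V × Bool), side' a ≠ side' b →
      ∀ u w, s(a, b) = s(u, w) → side' u ≠ side' w := by
    intro a b hab u w huv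
    rcases Sym2.eq_iff.mp huv with ⟨h1, h2⟩ | ⟨h1, h2⟩
    · rw [← h1, ← h2]; exact hab
    · rw [← h1, ← h2]; exact hab.symm
  have hbip' : ∀ x (u w : V × Bool), ends' x = s(u, w) → side' u ≠ side' w := by
    intro x
    match x with
    | Sum.inl (Sum.inl e) =>
      apply key
      rw [hside'f, hside'f, side_Lend ends side hbip, side_Rend ends side hbip]
      exact Bool.noConfusion
    | Sum.inl (Sum.inr e) =>
      apply key
      rw [hside't, hside't, side_Lend ends side hbip, side_Rend ends side hbip]
      simp
    | Sum.inr p =>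
      apply key
      rw [hside'f, hside't]
      simp
  -- membership characterizations
  have hmem1 : ∀ (e : ↥F) (v : V) (b : Bool),
      ((v, b) ∈ ends' (Sum.inl (Sum.inl e))) ↔ (b = false ∧ v ∈ ends ↑e) := by
    intro e v b
    show (v, b) ∈ s((L ↑e, false), (R ↑e, false)) ↔ _
    rw [Sym2.mem_iff, Prod.ext_iff, Prod.ext_iff, mem_ends_iff ends side hbip]
    constructor
    · rintro (⟨h1, h2⟩ | ⟨h1, h2⟩)
      · exact ⟨h2, Or.inl h1⟩
      · exact ⟨h2, Or.inr h1⟩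
    · rintro ⟨hb, h | h⟩
      · exact Or.inl ⟨h, hb⟩
      · exact Or.inr ⟨h, hb⟩
  have hmem2 : ∀ (e : ↥F) (v : V) (b : Bool),
      ((v, b) ∈ ends' (Sum.inl (Sum.inr e))) ↔ (b = true ∧ v ∈ ends ↑e) := by
    intro e v b
    show (v, b) ∈ s((L ↑e, true), (R ↑e, true)) ↔ _
    rw [Sym2.mem_iff, Prod.ext_iff, Prod.ext_iff, mem_ends_iff ends side hbip]
    constructor
    · rintro (⟨h1, h2⟩ | ⟨h1, h2⟩)
      · exact ⟨h2, Or.inl h1⟩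
      · exact ⟨h2, Or.inr h1⟩
    · rintro ⟨hb, h | h⟩
      · exact Or.inl ⟨h, hb⟩
      · exact Or.inr ⟨h, hb⟩
  have hmem3 : ∀ (p : Σ v : ↥NI, Fin (k ↑v)) (v : V) (b : Bool),
      ((v, b) ∈ ends' (Sum.inr p)) ↔ (v = ↑p.1) := by
    intro p v b
    show (v, b) ∈ s(((p.1 : V), false), ((p.1 : V), true)) ↔ _
    rw [Sym2.mem_iff, Prod.ext_iff, Prod.ext_iff]
    constructor
    · rintro (⟨h1, _⟩ | ⟨h1, _⟩) <;> exact h1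
    · intro h
      cases b
      · exact Or.inl ⟨h, rfl⟩
      · exact Or.inr ⟨h, rfl⟩
  have hNIdeg : ∀ v, v ∉ NI → degF ends F v = 0 := by
    intro v hv
    rw [degF, card_eq_zero]
    rw [filter_eq_empty_iff]
    intro e he hve
    apply hv
    rw [hNI, mem_union]
    rcases (mem_ends_iff ends side hbip).mp hve with h | h
    · exact Or.inl (mem_image.mpr ⟨e, he, h.symm⟩)
    · exact Or.inr (mem_image.mpr ⟨e, he, h.symm⟩)
  have hpads : ∀ (v : V) (b : Bool), #(univ.filter
      (fun p : Σ w : ↥NI, Fin (k ↑w) => (v, b) ∈ ends' (Sum.inr p))) =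
      (if v ∈ NI then k v else 0) := by
    intro v b
    have : (univ.filter (fun p : Σ w : ↥NI, Fin (k ↑w) => (v, b) ∈ ends' (Sum.inr p))) =
        (univ.filter (fun p : Σ w : ↥NI, Fin (k ↑w) => ((v = ↑p.1 : Prop)))) := by
      apply filter_congr
      intro p _
      rw [hmem3]
    rw [this, card_filter_sigma (f := fun w : ↥NI => Fin (k ↑w)) (fun w => v = ↑w)]
    by_cases hv : v ∈ NI
    · have hf : (univ.filter (fun w : ↥NI => v = ↑w)) = {⟨v, hv⟩} := by
        ext ⟨w, hw⟩
        simp only [mem_filter, mem_univ, true_and, mem_singleton]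
        constructor
        · intro h; exact Subtype.ext h.symm
        · intro h; exact (congrArg Subtype.val h).symm
      rw [hf, Finset.sum_singleton, if_pos hv, Fintype.card_fin]
    · have hf : (univ.filter (fun w : ↥NI => v = ↑w)) = ∅ := by
        rw [filter_eq_empty_iff]
        rintro ⟨w, hw⟩ _ h
        exact hv (h ▸ hw)
      rw [hf, Finset.sum_empty, if_neg hv]
  have hdeg' : ∀ w : V × Bool, degF ends' univ w = D ∨ degF ends' univ w = 0 := by
    rintro ⟨v, b⟩
    have hsplit : degF ends' univ (v, b) =
        #(univ.filter (fun e : ↥F => (v, b) ∈ ends' (Sum.inl (Sum.inl e)))) +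
        #(univ.filter (fun e : ↥F => (v, b) ∈ ends' (Sum.inl (Sum.inr e)))) +
        #(univ.filter (fun p : Σ w : ↥NI, Fin (k ↑w) => (v, b) ∈ ends' (Sum.inr p))) := by
      rw [degF, card_filter_sum, card_filter_sum]
    rw [hsplit, hpads]
    cases b
    · have h1 : (univ.filter (fun e : ↥F => (v, false) ∈ ends' (Sum.inl (Sum.inl e)))) =
          (univ.filter (fun e : ↥F => v ∈ ends ↑e)) := by
        apply filter_congr; intro e _; rw [hmem1]; simp
      have h2 : (univ.filter (fun e : ↥F => (v, false) ∈ ends' (Sum.inl (Sum.inr e)))) = ∅ := by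
        rw [filter_eq_empty_iff]; intro e _ h; rw [hmem2] at h; exact Bool.noConfusion h.1
      rw [h1, h2, card_filter_subtype F (fun e => v ∈ ends e), card_empty]
      by_cases hv : v ∈ NI
      · left
        rw [if_pos hv]
        have := hdeg v
        change degF ends F v + 0 + (D - degF ends F v) = D
        omega
      · right
        rw [if_neg hv]
        have := hNIdeg v hv
        change degF ends F v + 0 + 0 = 0
        omega
    · have h1 : (univ.filter (fun e : ↥F => (v, true) ∈ ends' (Sum.inl (Sum.inl e)))) = ∅ := by
        rw [filter_eq_empty_iff]; intro e _ h; rw [hmem1] at h; exact Bool.noConfusion h.1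
      have h2 : (univ.filter (fun e : ↥F => (v, true) ∈ ends' (Sum.inl (Sum.inr e)))) =
          (univ.filter (fun e : ↥F => v ∈ ends ↑e)) := by
        apply filter_congr; intro e _; rw [hmem2]; simp
      rw [h1, h2, card_filter_subtype F (fun e => v ∈ ends e), card_empty]
      by_cases hv : v ∈ NI
      · left
        rw [if_pos hv]
        have := hdeg v
        change 0 + degF ends F v + (D - degF ends F v) = D
        omega
      · right
        rw [if_neg hv]
        have := hNIdeg v hv
        change 0 + degF ends F v + 0 = 0
        omega
  obtain ⟨c'', hc''1, hc''2⟩ := regular_color ends' side' hbip' D univ C hC hdeg'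
  refine ⟨fun e => if he : e ∈ F then c'' (Sum.inl (Sum.inl ⟨e, he⟩)) else 0, ?_, ?_⟩
  · intro e he
    dsimp only
    rw [dif_pos he]
    exact hc''1 _ (mem_univ _)
  · intro e he f hf hadj
    dsimp only
    rw [dif_pos he, dif_pos hf]
    apply hc''2 _ (mem_univ _) _ (mem_univ _)
    obtain ⟨hne, v, hv1, hv2⟩ := hadj
    refine ⟨?_, (v, false), (hmem1 ⟨e, he⟩ v false).mpr ⟨rfl, hv1⟩,
      (hmem1 ⟨f, hf⟩ v false).mpr ⟨rfl, hv2⟩⟩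
    intro h
    apply hne
    have := Sum.inl.inj (Sum.inl.inj h)
    exact congrArg Subtype.val this


include hbip in
/-- Existence of a "stable matching" (kernel) for the two-sided preference order
given by a proper labelling `ℓ`: left vertices prefer small labels, right vertices
prefer large labels. -/
lemma stable (ℓ : E → ℕ) (F : Finset E)
    (hprop : ∀ e ∈ F, ∀ f ∈ F, MAdj ends e f → ℓ e ≠ ℓ f) :
    ∃ K, K ⊆ F ∧ IsMatching ends K ∧ ∀ e ∈ F, e ∉ K → ∃ f ∈ K,
      ((Lend ends side hbip f = Lend ends side hbip e ∧ ℓ f < ℓ e) ∨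
       (Rend ends side hbip f = Rend ends side hbip e ∧ ℓ e < ℓ f)) := by
  classical
  induction F using Finset.strongInduction with
  | _ F ih =>
  set L := Lend ends side hbip with hLdef
  set R := Rend ends side hbip with hRdef
  set T := F.filter (fun e => ∀ f ∈ F, R f = R e → ℓ f ≤ ℓ e) with hT
  by_cases hA : ∃ e ∈ T, ∃ g ∈ F, L g = L e ∧ ℓ e < ℓ g
  · obtain ⟨e, heT, g, hgF, hgL, hgl⟩ := hA
    have heF : e ∈ F := (mem_filter.mp heT).1
    have heTop : ∀ f ∈ F, R f = R e → ℓ f ≤ ℓ e := (mem_filter.mp heT).2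
    set F' := F.filter (fun x => ¬(L x = L e ∧ ℓ e < ℓ x)) with hF'
    have hgF' : g ∉ F' := by
      rw [hF', mem_filter]
      rintro ⟨-, hng⟩
      exact hng ⟨hgL, hgl⟩
    have hss : F' ⊂ F :=
      (ssubset_iff_of_subset (filter_subset _ _)).mpr ⟨g, hgF, hgF'⟩
    have hprop' : ∀ a ∈ F', ∀ b ∈ F', MAdj ends a b → ℓ a ≠ ℓ b := fun a ha b hb =>
      hprop a (filter_subset _ _ ha) b (filter_subset _ _ hb)
    obtain ⟨K, hKsub, hKmatch, habs⟩ := ih F' hss hprop'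
    have heF' : e ∈ F' := mem_filter.mpr ⟨heF, fun h => lt_irrefl _ h.2⟩
    have hexh : ∃ h ∈ K, L h = L e ∧ ℓ h ≤ ℓ e := by
      by_cases heK : e ∈ K
      · exact ⟨e, heK, rfl, le_refl _⟩
      · obtain ⟨f, hfK, hf⟩ := habs e heF' heK
        rcases hf with ⟨h1, h2⟩ | ⟨h1, h2⟩
        · exact ⟨f, hfK, h1, le_of_lt h2⟩
        · exact absurd (heTop f (filter_subset _ _ (hKsub hfK)) h1) (not_le.mpr h2)
    obtain ⟨hh, hhK, hhL, hhle⟩ := hexh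
    refine ⟨K, subset_trans hKsub (filter_subset _ _), hKmatch, ?_⟩
    intro x hxF hxK
    by_cases hxF' : x ∈ F'
    · exact habs x hxF' hxK
    · have hx : L x = L e ∧ ℓ e < ℓ x := by
        by_contra hc
        exact hxF' (mem_filter.mpr ⟨hxF, hc⟩)
      exact ⟨hh, hhK, Or.inl ⟨hhL.trans hx.1.symm, lt_of_le_of_lt hhle hx.2⟩⟩
  · refine ⟨T, filter_subset _ _, ?_, ?_⟩
    · intro e₁ he₁ e₂ he₂ hadj
      obtain ⟨hne, hsh⟩ := (madj_iff ends side hbip).mp hadj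
      have he₁F : e₁ ∈ F := (mem_filter.mp he₁).1
      have he₂F : e₂ ∈ F := (mem_filter.mp he₂).1
      have hℓne := hprop e₁ he₁F e₂ he₂F hadj
      rcases hsh with h1 | h1
      · rcases lt_or_gt_of_ne hℓne with hlt | hgt
        · exact hA ⟨e₁, he₁, e₂, he₂F, (by rw [← hLdef] at h1; exact h1.symm), hlt⟩
        · exact hA ⟨e₂, he₂, e₁, he₁F, (by rw [← hLdef] at h1; exact h1), hgt⟩
      · have hle1 := (mem_filter.mp he₂).2 e₁ he₁F (by rw [← hRdef] at h1; exact h1)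
        have hle2 := (mem_filter.mp he₁).2 e₂ he₂F (by rw [← hRdef] at h1; exact h1.symm)
        exact hℓne (le_antisymm hle1 hle2)
    · intro x hxF hxT
      set fiber := F.filter (fun f => R f = R x) with hfib
      have hne : fiber.Nonempty := ⟨x, mem_filter.mpr ⟨hxF, rfl⟩⟩
      obtain ⟨fs, hfsmem, hfsmax⟩ := Finset.exists_max_image fiber ℓ hne
      have hfsF : fs ∈ F := (mem_filter.mp hfsmem).1
      have hfsR : R fs = R x := (mem_filter.mp hfsmem).2
      have hfsT : fs ∈ T := by
        rw [hT, mem_filter]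
        refine ⟨hfsF, fun f hf hRf => ?_⟩
        exact hfsmax f (mem_filter.mpr ⟨hf, by rw [hRf, hfsR]⟩)
      have hxlt : ℓ x < ℓ fs := by
        have hxnT := hxT
        rw [hT, mem_filter] at hxnT
        push_neg at hxnT
        obtain ⟨f, hfF, hfR, hfgt⟩ := hxnT hxF
        exact lt_of_lt_of_le hfgt (hfsmax f (mem_filter.mpr ⟨hfF, hfR⟩))
      exact ⟨fs, hfsT, Or.inr ⟨hfsR, hxlt⟩⟩


include hbip in
/-- Kernel-based list edge-colouring: if each edge has a list larger than its
out-degree in the two-sided preference orientation given by a proper labelling `ℓ`,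
then a proper colouring from the lists exists. -/
lemma list_color (ℓ : E → ℕ) (F : Finset E) :
    ∀ (Lst : E → Finset ℕ),
    (∀ e ∈ F, ∀ f ∈ F, MAdj ends e f → ℓ e ≠ ℓ f) →
    (∀ e ∈ F, #(F.filter (fun f =>
        (Lend ends side hbip f = Lend ends side hbip e ∧ ℓ f < ℓ e) ∨
        (Rend ends side hbip f = Rend ends side hbip e ∧ ℓ e < ℓ f))) < #(Lst e)) →
    ∃ c : E → ℕ, (∀ e ∈ F, c e ∈ Lst e) ∧
      ∀ e ∈ F, ∀ f ∈ F, MAdj ends e f → c e ≠ c f := by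
  classical
  induction F using Finset.strongInduction with
  | _ F ih =>
  intro Lst hprop hout
  by_cases hFe : F = ∅
  · refine ⟨fun _ => 0, ?_, ?_⟩ <;> intro e he <;> rw [hFe] at he <;>
      exact absurd he (notMem_empty e)
  obtain ⟨e₀, he₀⟩ := nonempty_of_ne_empty hFe
  have hL0 : (Lst e₀).Nonempty := card_pos.mp (lt_of_le_of_lt (Nat.zero_le _) (hout e₀ he₀))
  obtain ⟨p, hp⟩ := hL0
  set Fp := F.filter (fun e => p ∈ Lst e) with hFp
  have he₀p : e₀ ∈ Fp := mem_filter.mpr ⟨he₀, hp⟩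
  have hpropp : ∀ e ∈ Fp, ∀ f ∈ Fp, MAdj ends e f → ℓ e ≠ ℓ f := fun a ha b hb =>
    hprop a (filter_subset _ _ ha) b (filter_subset _ _ hb)
  obtain ⟨K, hKsub, hKmatch, habs⟩ := stable ends side hbip ℓ Fp hpropp
  have hKne : K.Nonempty := by
    by_cases he₀K : e₀ ∈ K
    · exact ⟨e₀, he₀K⟩
    · obtain ⟨f, hfK, -⟩ := habs e₀ he₀p he₀K
      exact ⟨f, hfK⟩
  have hKF : K ⊆ F := subset_trans hKsub (filter_subset _ _)
  have hss : F \ K ⊂ F := by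
    obtain ⟨kk, hkk⟩ := hKne
    refine (ssubset_iff_of_subset sdiff_subset).mpr ⟨kk, hKF hkk, ?_⟩
    rw [mem_sdiff]
    rintro ⟨-, h2⟩
    exact h2 hkk
  set Lst' : E → Finset ℕ := fun e => if e ∈ Fp then (Lst e).erase p else Lst e with hLst'
  have hprop' : ∀ e ∈ F \ K, ∀ f ∈ F \ K, MAdj ends e f → ℓ e ≠ ℓ f := fun a ha b hb =>
    hprop a (sdiff_subset ha) b (sdiff_subset hb)
  have hout' : ∀ e ∈ F \ K, #((F \ K).filter (fun f =>
      (Lend ends side hbip f = Lend ends side hbip e ∧ ℓ f < ℓ e) ∨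
      (Rend ends side hbip f = Rend ends side hbip e ∧ ℓ e < ℓ f))) < #(Lst' e) := by
    intro e heF'
    have heF : e ∈ F := (mem_sdiff.mp heF').1
    have heK : e ∉ K := (mem_sdiff.mp heF').2
    have h3 := hout e heF
    by_cases heFp : e ∈ Fp
    · obtain ⟨kk, hkkK, hkk⟩ := habs e heFp heK
      have hkkmem : kk ∈ F.filter (fun f =>
          (Lend ends side hbip f = Lend ends side hbip e ∧ ℓ f < ℓ e) ∨
          (Rend ends side hbip f = Rend ends side hbip e ∧ ℓ e < ℓ f)) :=
        mem_filter.mpr ⟨hKF hkkK, hkk⟩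
      have hsub : (F \ K).filter (fun f =>
          (Lend ends side hbip f = Lend ends side hbip e ∧ ℓ f < ℓ e) ∨
          (Rend ends side hbip f = Rend ends side hbip e ∧ ℓ e < ℓ f)) ⊆
          (F.filter (fun f =>
          (Lend ends side hbip f = Lend ends side hbip e ∧ ℓ f < ℓ e) ∨
          (Rend ends side hbip f = Rend ends side hbip e ∧ ℓ e < ℓ f))).erase kk := by
        intro f hf
        rw [mem_filter, mem_sdiff] at hf
        rw [mem_erase, mem_filter]
        exact ⟨fun hfk => hf.1.2 (hfk ▸ hkkK), hf.1.1, hf.2⟩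
      have h1 := card_le_card hsub
      rw [card_erase_of_mem hkkmem] at h1
      have h2 : #(Lst' e) = #(Lst e) - 1 := by
        rw [hLst']
        simp only [if_pos heFp]
        rw [card_erase_of_mem (mem_filter.mp heFp).2]
      have h4 : 1 ≤ #(F.filter (fun f =>
          (Lend ends side hbip f = Lend ends side hbip e ∧ ℓ f < ℓ e) ∨
          (Rend ends side hbip f = Rend ends side hbip e ∧ ℓ e < ℓ f))) :=
        card_pos.mpr ⟨kk, hkkmem⟩
      omega
    · have h2 : Lst' e = Lst e := by rw [hLst']; simp only [if_neg heFp]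
      rw [h2]
      exact lt_of_le_of_lt (card_le_card (filter_subset_filter _ sdiff_subset)) h3
  obtain ⟨c', hc'1, hc'2⟩ := ih (F \ K) hss Lst' hprop' hout'
  refine ⟨fun f => if f ∈ K then p else c' f, ?_, ?_⟩
  · intro e he
    dsimp only
    by_cases heK : e ∈ K
    · rw [if_pos heK]
      exact (mem_filter.mp (hKsub heK)).2
    · rw [if_neg heK]
      have := hc'1 e (mem_sdiff.mpr ⟨he, heK⟩)
      by_cases heFp : e ∈ Fp
      · rw [hLst'] at this
        simp only [if_pos heFp] at this
        exact erase_subset _ _ this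
      · rw [hLst'] at this
        simp only [if_neg heFp] at this
        exact this
  · intro e he f hf hadj
    dsimp only
    by_cases heK : e ∈ K <;> by_cases hfK : f ∈ K
    · exact absurd hadj (hKmatch e heK f hfK)
    · rw [if_pos heK, if_neg hfK]
      have hcf := hc'1 f (mem_sdiff.mpr ⟨hf, hfK⟩)
      by_cases hfFp : f ∈ Fp
      · rw [hLst'] at hcf
        simp only [if_pos hfFp] at hcf
        exact fun hpc => (ne_of_mem_erase hcf) hpc.symm
      · rw [hLst'] at hcf
        simp only [if_neg hfFp] at hcf
        intro hpc
        rw [hFp, mem_filter] at hfFp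
        exact hfFp ⟨hf, hpc ▸ hcf⟩
    · rw [if_neg heK, if_pos hfK]
      have hce := hc'1 e (mem_sdiff.mpr ⟨he, heK⟩)
      by_cases heFp : e ∈ Fp
      · rw [hLst'] at hce
        simp only [if_pos heFp] at hce
        exact ne_of_mem_erase hce
      · rw [hLst'] at hce
        simp only [if_neg heFp] at hce
        intro hpc
        rw [hFp, mem_filter] at heFp
        exact heFp ⟨he, hpc ▸ hce⟩
    · rw [if_neg heK, if_neg hfK]
      exact hc'2 e (mem_sdiff.mpr ⟨he, heK⟩) f (mem_sdiff.mpr ⟨hf, hfK⟩) hadj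

end

end BEM

/-- Theorem 4: in a bipartite multigraph of maximum degree `Δ`, any precoloured matching
extends to a proper edge-colouring with palette `{1, …, Δ + 1}`. -/
theorem bipartite_extend_matching [Fintype E] (ends : E → Sym2 V)
    (hloop : ∀ e, ¬ (ends e).IsDiag)
    (side : V → Bool)
    (hbip : ∀ (e : E) (u v : V), ends e = s(u, v) → side u ≠ side v)
    (Δ : ℕ) (hΔ : IsGreatest (Set.range (mdeg ends)) Δ)
    (M : Set E) (hM : ∀ e ∈ M, ∀ f ∈ M, ¬ MAdj ends e f)
    (pre : E → ℕ) (hpal : ∀ e ∈ M, pre e ∈ Finset.Icc 1 (Δ + 1)) :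
    ∃ c : E → ℕ, MProper ends c ∧ (∀ e, c e ∈ Finset.Icc 1 (Δ + 1)) ∧
      ∀ e ∈ M, c e = pre e := by
  classical
  open Finset BEM in
  set L := BEM.Lend ends side hbip with hLdef
  set R := BEM.Rend ends side hbip with hRdef
  have hmdeg : ∀ v, mdeg ends v = BEM.degF ends Finset.univ v := by
    intro v
    rw [mdeg, Set.ncard_eq_toFinset_card']
    congr 1
    ext e
    simp [Set.mem_toFinset]
  have hdegΔ : ∀ v, BEM.degF ends Finset.univ v ≤ Δ := by
    intro v
    rw [← hmdeg]
    exact hΔ.2 ⟨v, rfl⟩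
  have hedgepos : ∀ (e : E) (v : V), v ∈ ends e → 1 ≤ BEM.degF ends Finset.univ v := by
    intro e v hv
    exact Finset.card_pos.mpr ⟨e, Finset.mem_filter.mpr ⟨Finset.mem_univ _, hv⟩⟩
  rcases Nat.eq_zero_or_pos Δ with hΔ0 | hΔ1
  · have hnoE : ∀ e : E, False := by
      intro e
      have h1 := hedgepos e (L e)
        ((BEM.mem_ends_iff ends side hbip).mpr (Or.inl rfl))
      have h2 := hdegΔ (L e)
      omega
    exact ⟨fun _ => 1, fun e _ _ => (hnoE e).elim, fun e => (hnoE e).elim,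
      fun e _ => (hnoE e).elim⟩
  set F₀ : Finset E := Finset.univ.filter (fun e => e ∈ M) with hF₀
  set G' : Finset E := Finset.univ.filter (fun e => e ∉ M) with hG'
  have hF₀mem : ∀ {e : E}, e ∈ F₀ ↔ e ∈ M := by
    intro e; rw [hF₀, Finset.mem_filter]; simp
  have hG'mem : ∀ {e : E}, e ∈ G' ↔ e ∉ M := by
    intro e; rw [hG', Finset.mem_filter]; simp
  have hdegG' : ∀ v, BEM.degF ends G' v ≤ Δ := fun v =>
    le_trans (BEM.degF_mono ends (Finset.filter_subset _ _) v) (hdegΔ v)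
  have hdrop : ∀ m ∈ F₀, ∀ v, v ∈ ends m → BEM.degF ends G' v ≤ Δ - 1 := by
    intro m hm v hv
    have hmG' : m ∉ G' := by
      rw [hG'mem]
      intro h
      exact h (hF₀mem.mp hm)
    have hsub : G'.filter (fun e => v ∈ ends e) ⊆
        (Finset.univ.filter (fun e => v ∈ ends e)).erase m := by
      intro f hf
      rw [Finset.mem_filter] at hf
      rw [Finset.mem_erase, Finset.mem_filter]
      exact ⟨fun h => hmG' (h ▸ hf.1), Finset.mem_univ _, hf.2⟩
    have h1 := Finset.card_le_card hsub
    rw [Finset.card_erase_of_mem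
      (show m ∈ Finset.univ.filter (fun e => v ∈ ends e) from
        Finset.mem_filter.mpr ⟨Finset.mem_univ m, hv⟩)] at h1
    have h2 := hdegΔ v
    have h3 : BEM.degF ends G' v ≤ BEM.degF ends Finset.univ v - 1 := h1
    omega
  -- the two covering matchings
  set SL := (G'.image L).filter (fun x => BEM.degF ends G' x = Δ) with hSL
  have hSLspec : ∀ v ∈ SL, side v = true ∧ BEM.degF ends G' v = Δ := by
    intro v hv
    rw [hSL, Finset.mem_filter, Finset.mem_image] at hv
    obtain ⟨⟨e, _, rfl⟩, hdeg⟩ := hv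
    exact ⟨BEM.side_Lend ends side hbip e, hdeg⟩
  obtain ⟨N₁, hN₁G, hN₁match, hN₁cov, hN₁meet⟩ :=
    BEM.hall_cover ends side hbip G' Δ hΔ1 hdegG' SL hSLspec
  set side₂ : V → Bool := fun v => ! side v with hside₂
  have hbip₂ : ∀ (e : E) (u v : V), ends e = s(u, v) → side₂ u ≠ side₂ v := by
    intro e u v h hc
    rw [hside₂] at hc
    simp only [Bool.not_inj_iff] at hc
    exact hbip e u v h hc
  set SR := (G'.image R).filter (fun x => BEM.degF ends G' x = Δ) with hSRdef
  have hSRspec : ∀ v ∈ SR, side₂ v = true ∧ BEM.degF ends G' v = Δ := by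
    intro v hv
    rw [hSRdef, Finset.mem_filter, Finset.mem_image] at hv
    obtain ⟨⟨e, _, rfl⟩, hdeg⟩ := hv
    refine ⟨?_, hdeg⟩
    have h := BEM.side_Rend ends side hbip e
    simp only [hside₂, hRdef, h]
    rfl
  obtain ⟨N₂, hN₂G, hN₂match, hN₂cov, hN₂meet⟩ :=
    BEM.hall_cover ends side₂ hbip₂ G' Δ hΔ1 hdegG' SR hSRspec
  set N₂' := N₂ \ N₁ with hN₂'
  set RS := G' \ (N₁ ∪ N₂') with hRS
  have hRSsub : RS ⊆ G' := Finset.sdiff_subset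
  have hdegRS : ∀ v, BEM.degF ends RS v ≤ Δ - 1 := by
    intro v
    by_cases hvd : BEM.degF ends G' v = Δ
    · have hpos : 0 < BEM.degF ends G' v := by omega
      obtain ⟨e₀, he₀⟩ := Finset.card_pos.mp hpos
      rw [Finset.mem_filter] at he₀
      have hcov : ∃ eN ∈ N₁ ∪ N₂', v ∈ ends eN := by
        rcases (BEM.mem_ends_iff ends side hbip).mp he₀.2 with h | h
        · have hvSL : v ∈ SL := by
            rw [hSL, Finset.mem_filter]
            exact ⟨Finset.mem_image.mpr ⟨e₀, he₀.1, h.symm⟩, hvd⟩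
          obtain ⟨eN, heN, hveN⟩ := hN₁cov v hvSL
          exact ⟨eN, Finset.mem_union_left _ heN, hveN⟩
        · have hvSR : v ∈ SR := by
            rw [hSRdef, Finset.mem_filter]
            exact ⟨Finset.mem_image.mpr ⟨e₀, he₀.1, h.symm⟩, hvd⟩
          obtain ⟨eN, heN, hveN⟩ := hN₂cov v hvSR
          by_cases heN₁ : eN ∈ N₁
          · exact ⟨eN, Finset.mem_union_left _ heN₁, hveN⟩
          · exact ⟨eN, Finset.mem_union_right _ (Finset.mem_sdiff.mpr ⟨heN, heN₁⟩), hveN⟩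
      obtain ⟨eN, heN, hveN⟩ := hcov
      have heNG : eN ∈ G' := by
        rcases Finset.mem_union.mp heN with h | h
        · exact hN₁G h
        · exact hN₂G (Finset.mem_sdiff.mp h).1
      have hsub : RS.filter (fun e => v ∈ ends e) ⊆
          (G'.filter (fun e => v ∈ ends e)).erase eN := by
        intro f hf
        rw [Finset.mem_filter, hRS, Finset.mem_sdiff] at hf
        rw [Finset.mem_erase, Finset.mem_filter]
        exact ⟨fun h => hf.1.2 (h ▸ heN), hf.1.1, hf.2⟩
      have h1 := Finset.card_le_card hsub
      rw [Finset.card_erase_of_mem (Finset.mem_filter.mpr ⟨heNG, hveN⟩)] at h1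
      have h2 : BEM.degF ends G' v = Δ := hvd
      change BEM.degF ends RS v ≤ _
      have h3 : BEM.degF ends RS v ≤ BEM.degF ends G' v - 1 := h1
      omega
    · have h1 := BEM.degF_mono ends (hRSsub) v
      have h2 := hdegG' v
      omega
  obtain ⟨c₀, hc₀mem, hc₀prop⟩ := BEM.konig ends side hbip RS (Δ - 1) hdegRS
    (Finset.Icc 2 Δ) (by rw [Nat.card_Icc]; omega)
  set ℓ : E → ℕ := fun e => if e ∈ N₁ then 1 else if e ∈ N₂' then Δ + 1 else
    if e ∈ RS then c₀ e else 1 with hℓ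
  -- membership facts about N₁ / N₂'
  have hN₁L : ∀ e ∈ N₁, BEM.degF ends G' (L e) = Δ := by
    intro e he
    obtain ⟨v, hvSL, hve⟩ := hN₁meet e he
    have hvspec := hSLspec v hvSL
    rcases (BEM.mem_ends_iff ends side hbip).mp hve with h | h
    · have h' : L e = v := by rw [hLdef]; exact h.symm
      rw [h']; exact hvspec.2
    · exfalso
      have := BEM.side_Rend ends side hbip e
      rw [← h, hvspec.1] at this
      exact Bool.noConfusion this
  have hN₂R : ∀ e ∈ N₂, BEM.degF ends G' (R e) = Δ := by
    intro e he
    obtain ⟨v, hvSR, hve⟩ := hN₂meet e he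
    have hvspec := hSRspec v hvSR
    have hvf : side v = false := by
      have := hvspec.1
      rw [hside₂] at this
      simp only [Bool.not_eq_true'] at this
      exact this
    rcases (BEM.mem_ends_iff ends side hbip).mp hve with h | h
    · exfalso
      have := BEM.side_Lend ends side hbip e
      rw [← h, hvf] at this
      exact Bool.noConfusion this
    · have h' : R e = v := by rw [hRdef]; exact h.symm
      rw [h']; exact hvspec.2
  set matchedL : V → Prop := fun x => ∃ m ∈ F₀, L m = x with hmatchedL
  set matchedR : V → Prop := fun y => ∃ m ∈ F₀, R m = y with hmatchedR
  have hmldeg : ∀ x, matchedL x → BEM.degF ends G' x ≤ Δ - 1 := by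
    rintro x ⟨m, hm, rfl⟩
    exact hdrop m hm _ ((BEM.mem_ends_iff ends side hbip).mpr (Or.inl rfl))
  have hmrdeg : ∀ y, matchedR y → BEM.degF ends G' y ≤ Δ - 1 := by
    rintro y ⟨m, hm, rfl⟩
    exact hdrop m hm _ ((BEM.mem_ends_iff ends side hbip).mpr (Or.inr rfl))
  -- value of ℓ case by case
  have hval : ∀ g ∈ G', (g ∈ N₁ ∧ ℓ g = 1) ∨ (g ∈ N₂' ∧ ℓ g = Δ + 1) ∨
      (g ∈ RS ∧ ℓ g = c₀ g ∧ 2 ≤ c₀ g ∧ c₀ g ≤ Δ) := by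
    intro g hg
    by_cases h1 : g ∈ N₁
    · left; exact ⟨h1, by rw [hℓ]; simp only [if_pos h1]⟩
    by_cases h2 : g ∈ N₂'
    · right; left; exact ⟨h2, by rw [hℓ]; simp only [if_neg h1, if_pos h2]⟩
    have h3 : g ∈ RS := by
      rw [hRS, Finset.mem_sdiff]
      exact ⟨hg, fun hc => (Finset.mem_union.mp hc).elim h1 h2⟩
    right; right
    refine ⟨h3, by rw [hℓ]; simp only [if_neg h1, if_neg h2, if_pos h3], ?_, ?_⟩
    · exact (Finset.mem_Icc.mp (hc₀mem g h3)).1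
    · exact (Finset.mem_Icc.mp (hc₀mem g h3)).2
  have hℓrange : ∀ g ∈ G', 1 ≤ ℓ g ∧ ℓ g ≤ Δ + 1 := by
    intro g hg
    rcases hval g hg with ⟨-, h⟩ | ⟨-, h⟩ | ⟨-, h, h2, h3⟩ <;> omega
  have hℓlo : ∀ g ∈ G', matchedL (L g) → 2 ≤ ℓ g := by
    intro g hg hml
    have hgn₁ : g ∉ N₁ := by
      intro hgN
      have h1 := hN₁L g hgN
      have h2 := hmldeg _ hml
      omega
    rcases hval g hg with ⟨h, -⟩ | ⟨-, h⟩ | ⟨-, h, h2, h3⟩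
    · exact absurd h hgn₁
    · omega
    · omega
  have hℓhi : ∀ g ∈ G', matchedR (R g) → ℓ g ≤ Δ := by
    intro g hg hmr
    have hgn₂ : g ∉ N₂' := by
      intro hgN
      have h1 := hN₂R g (Finset.mem_sdiff.mp hgN).1
      have h2 := hmrdeg _ hmr
      omega
    rcases hval g hg with ⟨-, h⟩ | ⟨h, -⟩ | ⟨-, h, h2, h3⟩
    · omega
    · exact absurd h hgn₂
    · omega
  have hℓproper : ∀ e ∈ G', ∀ f ∈ G', MAdj ends e f → ℓ e ≠ ℓ f := by
    intro e he f hf hadj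
    rcases hval e he with ⟨he1, hv1⟩ | ⟨he1, hv1⟩ | ⟨he1, hv1, hv1a, hv1b⟩ <;>
      rcases hval f hf with ⟨hf1, hv2⟩ | ⟨hf1, hv2⟩ | ⟨hf1, hv2, hv2a, hv2b⟩
    · exact absurd hadj (hN₁match e he1 f hf1)
    · omega
    · omega
    · omega
    · exact absurd hadj (hN₂match e (Finset.mem_sdiff.mp he1).1 f (Finset.mem_sdiff.mp hf1).1)
    · omega
    · omega
    · omega
    · rw [hv1, hv2]
      exact hc₀prop e he1 f hf1 hadj
  -- the lists
  set mCol : E → Finset ℕ := fun e =>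
    (F₀.filter (fun m => L m = L e ∨ R m = R e)).image pre with hmCol
  set Lst : E → Finset ℕ := fun e => (Finset.Icc 1 (Δ + 1)) \ mCol e with hLst
  have hmcolcard : ∀ e, #(mCol e) ≤ (if matchedL (L e) then 1 else 0) +
      (if matchedR (R e) then 1 else 0) := by
    intro e
    have himg := Finset.card_image_le (s := F₀.filter (fun m => L m = L e ∨ R m = R e)) (f := pre)
    have hsplit : F₀.filter (fun m => L m = L e ∨ R m = R e) ⊆
        (F₀.filter (fun m => L m = L e)) ∪ (F₀.filter (fun m => R m = R e)) := by
      intro m hm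
      have hm' := Finset.mem_filter.mp hm
      rcases hm'.2 with h | h
      · exact Finset.mem_union_left _ (Finset.mem_filter.mpr ⟨hm'.1, h⟩)
      · exact Finset.mem_union_right _ (Finset.mem_filter.mpr ⟨hm'.1, h⟩)
    have hL1 : #(F₀.filter (fun m => L m = L e)) ≤ (if matchedL (L e) then 1 else 0) := by
      by_cases hml : matchedL (L e)
      · rw [if_pos hml]
        apply Finset.card_le_one.mpr
        intro a ha b hb
        have ha' := Finset.mem_filter.mp ha
        have hb' := Finset.mem_filter.mp hb
        by_contra hab
        exact hM a (hF₀mem.mp ha'.1) b (hF₀mem.mp hb'.1)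
          ((BEM.madj_iff ends side hbip).mpr ⟨hab, Or.inl (by rw [← hLdef, ha'.2, hb'.2])⟩)
      · rw [if_neg hml]
        rw [Nat.le_zero, Finset.card_eq_zero, Finset.filter_eq_empty_iff]
        intro m hm hc
        exact hml ⟨m, hm, hc⟩
    have hR1 : #(F₀.filter (fun m => R m = R e)) ≤ (if matchedR (R e) then 1 else 0) := by
      by_cases hmr : matchedR (R e)
      · rw [if_pos hmr]
        apply Finset.card_le_one.mpr
        intro a ha b hb
        have ha' := Finset.mem_filter.mp ha
        have hb' := Finset.mem_filter.mp hb
        by_contra hab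
        exact hM a (hF₀mem.mp ha'.1) b (hF₀mem.mp hb'.1)
          ((BEM.madj_iff ends side hbip).mpr ⟨hab, Or.inr (by rw [← hRdef, ha'.2, hb'.2])⟩)
      · rw [if_neg hmr]
        rw [Nat.le_zero, Finset.card_eq_zero, Finset.filter_eq_empty_iff]
        intro m hm hc
        exact hmr ⟨m, hm, hc⟩
    calc #(mCol e) ≤ #(F₀.filter (fun m => L m = L e ∨ R m = R e)) := himg
      _ ≤ #((F₀.filter (fun m => L m = L e)) ∪ (F₀.filter (fun m => R m = R e))) :=
          Finset.card_le_card hsplit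
      _ ≤ #(F₀.filter (fun m => L m = L e)) + #(F₀.filter (fun m => R m = R e)) :=
          Finset.card_union_le _ _
      _ ≤ _ := Nat.add_le_add hL1 hR1
  have hout : ∀ e ∈ G', #(G'.filter (fun f =>
      (BEM.Lend ends side hbip f = BEM.Lend ends side hbip e ∧ ℓ f < ℓ e) ∨
      (BEM.Rend ends side hbip f = BEM.Rend ends side hbip e ∧ ℓ e < ℓ f))) < #(Lst e) := by
    intro e he
    set kx := if matchedL (L e) then 1 else 0 with hkx
    set ky := if matchedR (R e) then 1 else 0 with hky
    have hkx1 : kx ≤ 1 := by rw [hkx]; split <;> omega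
    have hky1 : ky ≤ 1 := by rw [hky]; split <;> omega
    have hkxe : 1 + kx ≤ ℓ e := by
      rw [hkx]
      by_cases hml : matchedL (L e)
      · rw [if_pos hml]; exact hℓlo e he hml
      · rw [if_neg hml]
        have := (hℓrange e he).1
        omega
    have hkye : ℓ e + ky ≤ Δ + 1 := by
      rw [hky]
      by_cases hmr : matchedR (R e)
      · rw [if_pos hmr]
        have := hℓhi e he hmr
        omega
      · rw [if_neg hmr]
        have := (hℓrange e he).2
        omega
    have hcard1 : #(G'.filter (fun f => L f = L e ∧ ℓ f < ℓ e)) ≤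
        #(Finset.Icc (1 + kx) (ℓ e - 1)) := by
      apply Finset.card_le_card_of_injOn ℓ
      · intro f hf
        rw [Finset.mem_coe, Finset.mem_filter] at hf
        rw [Finset.mem_coe, Finset.mem_Icc]
        constructor
        · rw [hkx]
          by_cases hml : matchedL (L e)
          · rw [if_pos hml]
            have : matchedL (L f) := by rw [hf.2.1]; exact hml
            exact hℓlo f hf.1 this
          · rw [if_neg hml]
            have := (hℓrange f hf.1).1
            omega
        · omega
      · intro f hf f' hf' hℓf
        simp only [Finset.coe_filter, Set.mem_setOf_eq] at hf hf'
        by_contra hne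
        exact hℓproper f hf.1 f' hf'.1
          ((BEM.madj_iff ends side hbip).mpr
            ⟨hne, Or.inl (by rw [← hLdef, hf.2.1, hf'.2.1])⟩) hℓf
    have hcard2 : #(G'.filter (fun f => R f = R e ∧ ℓ e < ℓ f)) ≤
        #(Finset.Icc (ℓ e + 1) (Δ + 1 - ky)) := by
      apply Finset.card_le_card_of_injOn ℓ
      · intro f hf
        rw [Finset.mem_coe, Finset.mem_filter] at hf
        rw [Finset.mem_coe, Finset.mem_Icc]
        constructor
        · omega
        · rw [hky]
          by_cases hmr : matchedR (R e)
          · rw [if_pos hmr]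
            have : matchedR (R f) := by rw [hf.2.1]; exact hmr
            have := hℓhi f hf.1 this
            omega
          · rw [if_neg hmr]
            have := (hℓrange f hf.1).2
            omega
      · intro f hf f' hf' hℓf
        simp only [Finset.coe_filter, Set.mem_setOf_eq] at hf hf'
        by_contra hne
        exact hℓproper f hf.1 f' hf'.1
          ((BEM.madj_iff ends side hbip).mpr
            ⟨hne, Or.inr (by rw [← hRdef, hf.2.1, hf'.2.1])⟩) hℓf
    have hsplit : G'.filter (fun f =>
        (BEM.Lend ends side hbip f = BEM.Lend ends side hbip e ∧ ℓ f < ℓ e) ∨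
        (BEM.Rend ends side hbip f = BEM.Rend ends side hbip e ∧ ℓ e < ℓ f)) ⊆
        (G'.filter (fun f => L f = L e ∧ ℓ f < ℓ e)) ∪
        (G'.filter (fun f => R f = R e ∧ ℓ e < ℓ f)) := by
      intro f hf
      have hf' := Finset.mem_filter.mp hf
      rcases hf'.2 with h | h
      · exact Finset.mem_union_left _ (Finset.mem_filter.mpr ⟨hf'.1, h⟩)
      · exact Finset.mem_union_right _ (Finset.mem_filter.mpr ⟨hf'.1, h⟩)
    have htot := le_trans (Finset.card_le_card hsplit) (Finset.card_union_le _ _)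
    have hmc := hmcolcard e
    rw [← hkx, ← hky] at hmc
    have hlstge : (Δ + 1) - #(mCol e) ≤ #(Lst e) := by
      rw [hLst]
      have := Finset.le_card_sdiff (mCol e) (Finset.Icc 1 (Δ + 1))
      rw [Nat.card_Icc] at this
      simpa using this
    rw [Nat.card_Icc] at hcard1 hcard2
    omega
  obtain ⟨c₁, hc₁mem, hc₁prop⟩ := BEM.list_color ends side hbip ℓ G' Lst hℓproper hout
  refine ⟨fun e => if e ∈ M then pre e else c₁ e, ?_, ?_, ?_⟩
  · intro e f hadj
    dsimp only
    have hshare : L e = L f ∨ R e = R f := ((BEM.madj_iff ends side hbip).mp hadj).2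
    by_cases heM : e ∈ M <;> by_cases hfM : f ∈ M
    · exact absurd hadj (hM e heM f hfM)
    · rw [if_pos heM, if_neg hfM]
      have hfG : f ∈ G' := hG'mem.mpr hfM
      have hc := hc₁mem f hfG
      rw [hLst, Finset.mem_sdiff] at hc
      intro hcc
      apply hc.2
      rw [hmCol, Finset.mem_image]
      exact ⟨e, Finset.mem_filter.mpr ⟨hF₀mem.mpr heM, hshare⟩, hcc⟩
    · rw [if_neg heM, if_pos hfM]
      have heG : e ∈ G' := hG'mem.mpr heM
      have hc := hc₁mem e heG
      rw [hLst, Finset.mem_sdiff] at hc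
      intro hcc
      apply hc.2
      rw [hmCol, Finset.mem_image]
      have hshare' : L f = L e ∨ R f = R e := by
        rcases hshare with h | h
        · exact Or.inl h.symm
        · exact Or.inr h.symm
      exact ⟨f, Finset.mem_filter.mpr ⟨hF₀mem.mpr hfM, hshare'⟩, hcc.symm⟩
    · rw [if_neg heM, if_neg hfM]
      exact hc₁prop e (hG'mem.mpr heM) f (hG'mem.mpr hfM) hadj
  · intro e
    dsimp only
    by_cases heM : e ∈ M
    · rw [if_pos heM]; exact hpal e heM
    · rw [if_neg heM]
      have hc := hc₁mem e (hG'mem.mpr heM)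
      rw [hLst, Finset.mem_sdiff] at hc
      exact hc.1
  · intro e heM
    dsimp only
    rw [if_pos heM]
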